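/- For 0 ≤ α < 1 and every z in the open unit disk, the real part of F_α(z) = z/(1 - α z²) satisfies 1/(α-1) < Re F_α(z) < 1/(1-α). -/

import Mathlib

theorem re_F_alpha_bounds (α : ℝ) (hα0 : 0 ≤ α) (hα1 : α < 1)
    (z : ℂ) (hz : ‖z‖ < 1) :
    1 / (α - 1) < (z / (1 - (α : ℂ) * z ^ 2)).re ∧
    (z / (1 - (α : ℂ) * z ^ 2)).re < 1 / (1 - α) := by
  set r := ‖z‖ with hr
  have hr0 : 0 ≤ r := norm_nonneg z
  have hnormw : ‖(α : ℂ) * z ^ 2‖ = α * r ^ 2 := by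
    simp [norm_mul, norm_pow, Complex.norm_real, abs_of_nonneg hα0, hr]
  have hden_pos : 0 < 1 - α * r ^ 2 := by nlinarith
  have hden : 1 - α * r ^ 2 ≤ ‖1 - (α : ℂ) * z ^ 2‖ := by
    calc 1 - α * r ^ 2 = ‖(1 : ℂ)‖ - ‖(α : ℂ) * z ^ 2‖ := by rw [hnormw, norm_one]
    _ ≤ ‖1 - (α : ℂ) * z ^ 2‖ := norm_sub_norm_le _ _
  have hF : ‖z / (1 - (α : ℂ) * z ^ 2)‖ < 1 / (1 - α) := by
    rw [norm_div]
    have hdne : (0 : ℝ) < ‖1 - (α : ℂ) * z ^ 2‖ := lt_of_lt_of_le hden_pos hden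
    rw [div_lt_div_iff₀ hdne (by linarith)]
    have h1 : r * (1 - α) < 1 - α * r ^ 2 := by nlinarith [mul_pos (sub_pos.mpr hz) (show (0:ℝ) < 1 + α * r by positivity)]
    calc r * (1 - α) < 1 - α * r ^ 2 := h1
    _ ≤ ‖1 - (α : ℂ) * z ^ 2‖ := hden
    _ = 1 * ‖1 - (α : ℂ) * z ^ 2‖ := (one_mul _).symm
  have habs : |(z / (1 - (α : ℂ) * z ^ 2)).re| < 1 / (1 - α) :=
    lt_of_le_of_lt (Complex.abs_re_le_norm _) hF
  rw [abs_lt] at habs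
  constructor
  · have : 1 / (α - 1) = -(1 / (1 - α)) := by
      rw [show α - 1 = -(1 - α) by ring, one_div, inv_neg, one_div]
    rw [this]; exact habs.1
  · exact habs.2
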